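/- Let the pairs (S_{1,i},S_{2,i}), i = 1,…,n, be i.i.d. finite-valued, let M1, M2 be finite-valued random variables that are mutually independent and jointly independent of (S1^n,S2^n), and let M12 = f12(M1,S1^n) and M21 = f21(M2,M12,S2^n) for deterministic functions f12, f21. Then I(M21;S2^n|M12,S1^n) = Σ_{i=1}^n I(S_{2,i};V_i|U_i,S_{1,i}), where U_i = (M12, S1^{i−1}, S2_{i+1}^n) and V_i = M21. -/
import Mathlib


open scoped BigOperators Classical
open Finset

namespace Paper

variable {Ω : Type} [Fintype Ω]

/-- `pr μ X a` is the probability that the random variable `X` takes the value `a`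
under the pmf `μ` on the finite sample space `Ω`. -/
noncomputable def pr {A : Type} (μ : Ω → ℝ) (X : Ω → A) (a : A) : ℝ :=
  ∑ ω, if X ω = a then μ ω else 0

/-- `μ` is a probability mass function on the finite space `Ω`. -/
def IsPMF (μ : Ω → ℝ) : Prop := (∀ ω, 0 ≤ μ ω) ∧ ∑ ω, μ ω = 1

/-- Shannon entropy (in bits) of the random variable `X` under `μ`. -/
noncomputable def ent {A : Type} [Fintype A] (μ : Ω → ℝ) (X : Ω → A) : ℝ :=
  -∑ a, pr μ X a * Real.logb 2 (pr μ X a)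

/-- Mutual information `I(X;Y)` (in bits) under `μ`. -/
noncomputable def mi {A B : Type} [Fintype A] [Fintype B] (μ : Ω → ℝ)
    (X : Ω → A) (Y : Ω → B) : ℝ :=
  ent μ X + ent μ Y - ent μ (fun ω => (X ω, Y ω))

/-- Conditional mutual information `I(X;Y|Z)` (in bits) under `μ`. -/
noncomputable def cmi {A B C : Type} [Fintype A] [Fintype B] [Fintype C] (μ : Ω → ℝ)
    (X : Ω → A) (Y : Ω → B) (Z : Ω → C) : ℝ :=
  ent μ (fun ω => (X ω, Z ω)) + ent μ (fun ω => (Y ω, Z ω))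
    - ent μ (fun ω => (X ω, Y ω, Z ω)) - ent μ Z

/-- `X` and `Y` are conditionally independent given `Z` under `μ`:
`P(X = a, Y = b | Z = c) = P(X = a | Z = c) · P(Y = b | Z = c)`
whenever `P(Z = c) ≠ 0`. -/
def CondIndep {A B C : Type} (μ : Ω → ℝ) (X : Ω → A) (Y : Ω → B) (Z : Ω → C) : Prop :=
  ∀ a b c, pr μ Z c ≠ 0 →
    pr μ (fun ω => (X ω, Y ω, Z ω)) (a, b, c) * pr μ Z c
      = pr μ (fun ω => (X ω, Z ω)) (a, c) * pr μ (fun ω => (Y ω, Z ω)) (b, c)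



/-! ### Auxiliary lemmas -/

lemma pr_nonneg {A : Type} {μ : Ω → ℝ} (h : ∀ ω, 0 ≤ μ ω) (X : Ω → A) (a : A) :
    0 ≤ pr μ X a := by
  apply Finset.sum_nonneg
  intro ω _
  by_cases hx : X ω = a <;> simp [hx, h ω]

lemma pr_mono {A B : Type} {μ : Ω → ℝ} (h : ∀ ω, 0 ≤ μ ω) {X : Ω → A} {Y : Ω → B}
    {a : A} {b : B} (himp : ∀ ω, X ω = a → Y ω = b) :
    pr μ X a ≤ pr μ Y b := by
  apply Finset.sum_le_sum
  intro ω _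
  by_cases hx : X ω = a
  · simp [hx, himp ω hx]
  · by_cases hy : Y ω = b <;> simp [hx, hy, h ω]

lemma pr_congr {A B : Type} {μ : Ω → ℝ} {X : Ω → A} {Y : Ω → B} {a : A} {b : B}
    (h : ∀ ω, X ω = a ↔ Y ω = b) : pr μ X a = pr μ Y b := by
  apply Finset.sum_congr rfl
  intro ω _
  by_cases hx : X ω = a
  · simp [hx, (h ω).1 hx]
  · have hy : ¬ Y ω = b := fun hy => hx ((h ω).2 hy)
    simp [hx, hy]

lemma ent_congr {A B : Type} [Fintype A] [Fintype B] {μ : Ω → ℝ} {X : Ω → A} {Y : Ω → B}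
    (f : A → B) (g : B → A) (hf : ∀ ω, Y ω = f (X ω)) (hg : ∀ ω, X ω = g (Y ω)) :
    ent μ X = ent μ Y := by
  unfold ent
  congr 1
  have hX0 : ∀ a, g (f a) ≠ a → pr μ X a = 0 := by
    intro a ha
    apply Finset.sum_eq_zero
    intro ω _
    by_cases hx : X ω = a
    · exact absurd (by rw [← hx, ← hf ω, ← hg ω, hx]) ha
    · simp [hx]
  have hY0 : ∀ b, f (g b) ≠ b → pr μ Y b = 0 := by
    intro b hb
    apply Finset.sum_eq_zero
    intro ω _
    by_cases hy : Y ω = b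
    · exact absurd (by rw [← hy, ← hg ω, ← hf ω, hy]) hb
    · simp [hy]
  have hXY : ∀ a, g (f a) = a → pr μ Y (f a) = pr μ X a := by
    intro a ha
    apply pr_congr
    intro ω
    constructor
    · intro hy
      rw [hg ω, hy, ha]
    · intro hx
      rw [hf ω, hx]
  rw [← Finset.sum_filter_ne_zero (s := Finset.univ)
        (f := fun a => pr μ X a * Real.logb 2 (pr μ X a)),
      ← Finset.sum_filter_ne_zero (s := Finset.univ)
        (f := fun b => pr μ Y b * Real.logb 2 (pr μ Y b))]
  apply Finset.sum_nbij' (i := fun a => f a) (j := fun b => g b)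
  · intro a ha
    simp only [Finset.mem_filter, Finset.mem_univ, true_and] at ha ⊢
    have hgf : g (f a) = a := by
      by_contra hc
      simp [hX0 a hc] at ha
    rw [hXY a hgf]
    exact ha
  · intro b hb
    simp only [Finset.mem_filter, Finset.mem_univ, true_and] at hb ⊢
    have hfg : f (g b) = b := by
      by_contra hc
      simp [hY0 b hc] at hb
    rw [← hfg, hXY (g b) (by rw [hfg])] at hb
    exact hb
  · intro a ha
    simp only [Finset.mem_filter, Finset.mem_univ, true_and] at ha
    by_contra hc
    simp [hX0 a hc] at ha
  · intro b hb
    simp only [Finset.mem_filter, Finset.mem_univ, true_and] at hb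
    by_contra hc
    simp [hY0 b hc] at hb
  · intro a ha
    simp only [Finset.mem_filter, Finset.mem_univ, true_and] at ha
    have hgf : g (f a) = a := by
      by_contra hc
      simp [hX0 a hc] at ha
    rw [hXY a hgf]

private lemma sum_rot {A B C : Type} [Fintype A] [Fintype B] [Fintype C] (f : A → B → C → ℝ) :
    ∑ a, ∑ b, ∑ c, f a b c = ∑ c, ∑ a, ∑ b, f a b c := by
  trans ∑ a, ∑ c, ∑ b, f a b c
  · exact Finset.sum_congr rfl fun a _ => Finset.sum_comm
  · exact Finset.sum_comm

lemma marg_z {A B C : Type} [Fintype A] [Fintype B] (μ : Ω → ℝ)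
    (X : Ω → A) (Y : Ω → B) (Z : Ω → C) (c : C) :
    ∑ a, ∑ b, pr μ (fun ω => (X ω, Y ω, Z ω)) (a, b, c) = pr μ Z c := by
  unfold pr
  rw [sum_rot]
  refine Finset.sum_congr rfl fun ω _ => ?_
  simp only [Prod.mk.injEq]
  by_cases h3 : Z ω = c <;> simp [h3, ite_and, Finset.sum_ite_eq]

lemma marg_xz {A B C : Type} [Fintype B] (μ : Ω → ℝ)
    (X : Ω → A) (Y : Ω → B) (Z : Ω → C) (a : A) (c : C) :
    ∑ b, pr μ (fun ω => (X ω, Y ω, Z ω)) (a, b, c)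
      = pr μ (fun ω => (X ω, Z ω)) (a, c) := by
  unfold pr
  rw [Finset.sum_comm]
  refine Finset.sum_congr rfl fun ω _ => ?_
  simp only [Prod.mk.injEq]
  by_cases h1 : X ω = a <;> by_cases h3 : Z ω = c <;> simp [h1, h3]

lemma marg_yz {A B C : Type} [Fintype A] (μ : Ω → ℝ)
    (X : Ω → A) (Y : Ω → B) (Z : Ω → C) (b : B) (c : C) :
    ∑ a, pr μ (fun ω => (X ω, Y ω, Z ω)) (a, b, c)
      = pr μ (fun ω => (Y ω, Z ω)) (b, c) := by
  unfold pr
  rw [Finset.sum_comm]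
  refine Finset.sum_congr rfl fun ω _ => ?_
  simp only [Prod.mk.injEq]
  by_cases h2 : Y ω = b <;> by_cases h3 : Z ω = c <;> simp [h2, h3]

lemma condIndep_ent {A B C : Type} [Fintype A] [Fintype B] [Fintype C]
    {μ : Ω → ℝ} (hμ : ∀ ω, 0 ≤ μ ω) {X : Ω → A} {Y : Ω → B} {Z : Ω → C}
    (hci : CondIndep μ X Y Z) :
    ent μ (fun ω => (X ω, Y ω, Z ω)) + ent μ Z
      = ent μ (fun ω => (X ω, Z ω)) + ent μ (fun ω => (Y ω, Z ω)) := by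
  set P : A × B × C → ℝ := pr μ (fun ω => (X ω, Y ω, Z ω)) with hP
  set Pz : C → ℝ := pr μ Z with hPz
  set Pxz : A × C → ℝ := pr μ (fun ω => (X ω, Z ω)) with hPxz
  set Pyz : B × C → ℝ := pr μ (fun ω => (Y ω, Z ω)) with hPyz
  have key : ∀ a b c,
      P (a, b, c) * Real.logb 2 (P (a, b, c)) + P (a, b, c) * Real.logb 2 (Pz c)
      = P (a, b, c) * Real.logb 2 (Pxz (a, c))
        + P (a, b, c) * Real.logb 2 (Pyz (b, c)) := by
    intro a b c
    by_cases h0 : P (a, b, c) = 0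
    · simp [h0]
    have hpos : 0 < P (a, b, c) := lt_of_le_of_ne (pr_nonneg hμ _ _) (Ne.symm h0)
    have hz : Pz c ≠ 0 := by
      have : P (a, b, c) ≤ Pz c :=
        pr_mono hμ (fun ω h => by simpa using congrArg (fun p => p.2.2) h)
      nlinarith
    have hxz : Pxz (a, c) ≠ 0 := by
      have : P (a, b, c) ≤ Pxz (a, c) :=
        pr_mono hμ (fun ω h => by
          simp only [Prod.mk.injEq] at h ⊢
          exact ⟨h.1, h.2.2⟩)
      nlinarith
    have hyz : Pyz (b, c) ≠ 0 := by
      have : P (a, b, c) ≤ Pyz (b, c) :=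
        pr_mono hμ (fun ω h => by
          simp only [Prod.mk.injEq] at h ⊢
          exact ⟨h.2.1, h.2.2⟩)
      nlinarith
    have hlog : Real.logb 2 (P (a, b, c)) + Real.logb 2 (Pz c)
        = Real.logb 2 (Pxz (a, c)) + Real.logb 2 (Pyz (b, c)) := by
      rw [← Real.logb_mul h0 hz, ← Real.logb_mul hxz hyz, hci a b c hz]
    linear_combination P (a, b, c) * hlog
  have hKEY : ∑ a, ∑ b, ∑ c,
        (P (a, b, c) * Real.logb 2 (P (a, b, c)) + P (a, b, c) * Real.logb 2 (Pz c))
      = ∑ a, ∑ b, ∑ c,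
        (P (a, b, c) * Real.logb 2 (Pxz (a, c))
          + P (a, b, c) * Real.logb 2 (Pyz (b, c))) :=
    Finset.sum_congr rfl fun a _ => Finset.sum_congr rfl fun b _ =>
      Finset.sum_congr rfl fun c _ => key a b c
  have S2 : ∑ a, ∑ b, ∑ c, P (a, b, c) * Real.logb 2 (Pz c)
      = ∑ c, Pz c * Real.logb 2 (Pz c) := by
    rw [sum_rot]
    refine Finset.sum_congr rfl fun c _ => ?_
    calc ∑ a, ∑ b, P (a, b, c) * Real.logb 2 (Pz c)
        = ∑ a, (∑ b, P (a, b, c)) * Real.logb 2 (Pz c) :=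
          Finset.sum_congr rfl fun a _ => (Finset.sum_mul ..).symm
      _ = (∑ a, ∑ b, P (a, b, c)) * Real.logb 2 (Pz c) := (Finset.sum_mul ..).symm
      _ = Pz c * Real.logb 2 (Pz c) := by rw [hP, hPz, marg_z]
  have S3 : ∑ a, ∑ b, ∑ c, P (a, b, c) * Real.logb 2 (Pxz (a, c))
      = ∑ a, ∑ c, Pxz (a, c) * Real.logb 2 (Pxz (a, c)) := by
    refine Finset.sum_congr rfl fun a _ => ?_
    calc ∑ b, ∑ c, P (a, b, c) * Real.logb 2 (Pxz (a, c))
        = ∑ c, ∑ b, P (a, b, c) * Real.logb 2 (Pxz (a, c)) := Finset.sum_comm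
      _ = ∑ c, (∑ b, P (a, b, c)) * Real.logb 2 (Pxz (a, c)) :=
          Finset.sum_congr rfl fun c _ => (Finset.sum_mul ..).symm
      _ = ∑ c, Pxz (a, c) * Real.logb 2 (Pxz (a, c)) := by
          refine Finset.sum_congr rfl fun c _ => ?_
          rw [hP, hPxz, marg_xz]
  have S4 : ∑ a, ∑ b, ∑ c, P (a, b, c) * Real.logb 2 (Pyz (b, c))
      = ∑ b, ∑ c, Pyz (b, c) * Real.logb 2 (Pyz (b, c)) := by
    rw [Finset.sum_comm]
    refine Finset.sum_congr rfl fun b _ => ?_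
    calc ∑ a, ∑ c, P (a, b, c) * Real.logb 2 (Pyz (b, c))
        = ∑ c, ∑ a, P (a, b, c) * Real.logb 2 (Pyz (b, c)) := Finset.sum_comm
      _ = ∑ c, (∑ a, P (a, b, c)) * Real.logb 2 (Pyz (b, c)) :=
          Finset.sum_congr rfl fun c _ => (Finset.sum_mul ..).symm
      _ = ∑ c, Pyz (b, c) * Real.logb 2 (Pyz (b, c)) := by
          refine Finset.sum_congr rfl fun c _ => ?_
          rw [hP, hPyz, marg_yz]
  have S1 : ∑ a, ∑ b, ∑ c, P (a, b, c) * Real.logb 2 (P (a, b, c))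
      = ∑ p : A × B × C, P p * Real.logb 2 (P p) := by
    rw [Fintype.sum_prod_type]
    exact Finset.sum_congr rfl fun a _ =>
      (Fintype.sum_prod_type (f := fun y : B × C => P (a, y) * Real.logb 2 (P (a, y)))).symm
  have S3' : ∑ a, ∑ c, Pxz (a, c) * Real.logb 2 (Pxz (a, c))
      = ∑ p : A × C, Pxz p * Real.logb 2 (Pxz p) :=
    (Fintype.sum_prod_type (f := fun p : A × C => Pxz p * Real.logb 2 (Pxz p))).symm
  have S4' : ∑ b, ∑ c, Pyz (b, c) * Real.logb 2 (Pyz (b, c))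
      = ∑ p : B × C, Pyz p * Real.logb 2 (Pyz p) :=
    (Fintype.sum_prod_type (f := fun p : B × C => Pyz p * Real.logb 2 (Pyz p))).symm
  simp only [Finset.sum_add_distrib] at hKEY
  rw [S1, S2, S3, S4, S3', S4'] at hKEY
  unfold ent
  rw [← hP, ← hPz, ← hPxz, ← hPyz]
  linarith

lemma pr_comp {A B : Type} [Fintype A] (μ : Ω → ℝ) (W : Ω → A) (F : A → B)
    (X : Ω → B) (hX : ∀ ω, X ω = F (W ω)) (b : B) :
    pr μ X b = ∑ a, if F a = b then pr μ W a else 0 := by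
  unfold pr
  have step : ∀ a, (if F a = b then ∑ ω, if W ω = a then μ ω else 0 else 0)
      = ∑ ω, if F a = b then (if W ω = a then μ ω else 0) else 0 := by
    intro a
    by_cases h : F a = b <;> simp [h]
  rw [Finset.sum_congr rfl fun a _ => step a, Finset.sum_comm]
  refine Finset.sum_congr rfl fun ω _ => ?_
  have step2 : ∀ a : A, (if F a = b then (if W ω = a then μ ω else 0) else 0)
      = if W ω = a then (if F a = b then μ ω else 0) else 0 := by
    intro a
    by_cases h1 : F a = b <;> by_cases h2 : W ω = a <;> simp [h1, h2]
  rw [Finset.sum_congr rfl fun a _ => step2 a, Finset.sum_ite_eq]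
  simp [hX ω]

private lemma iteq {p q : Prop} [Decidable p] [Decidable q] (h : p ↔ q) (x y : ℝ) :
    (if p then x else y) = (if q then x else y) := if_congr h rfl rfl

lemma condIndep_core {A B C G H 𝒳 𝒱 : Type}
    [Fintype A] [Fintype B] [Fintype C]
    (μ : Ω → ℝ) (u : Ω → A) (t : Ω → B) (r : Ω → C)
    (α : A → C → ℝ) (β : B → C → ℝ)
    (hfact : ∀ a b c, pr μ (fun ω => (u ω, t ω, r ω)) (a, b, c) = α a c * β b c)
    (x : A → C → 𝒳) (v : B → C → 𝒱) (g : B → C → G) (h : A → G → C → H)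
    (X : Ω → 𝒳) (hXe : ∀ ω, X ω = x (u ω) (r ω))
    (V : Ω → 𝒱) (hVe : ∀ ω, V ω = v (t ω) (r ω))
    (Z : Ω → C × G × H)
    (hZe : ∀ ω, Z ω = (r ω, g (t ω) (r ω), h (u ω) (g (t ω) (r ω)) (r ω))) :
    CondIndep μ X V Z := by
  intro x₀ v₀ z₀ _
  obtain ⟨c₀, g₀, h₀⟩ := z₀
  set W : Ω → A × B × C := fun ω => (u ω, t ω, r ω) with hW
  -- the master factorization computation
  have main : ∀ (PX : A → C → Prop) (PV : B → C → Prop),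
      (∑ a, ∑ b, ∑ c, if (c = c₀ ∧ g b c = g₀ ∧ h a (g b c) c = h₀ ∧ PX a c ∧ PV b c)
          then α a c * β b c else 0)
      = (∑ a, if h a g₀ c₀ = h₀ ∧ PX a c₀ then α a c₀ else 0)
        * (∑ b, if g b c₀ = g₀ ∧ PV b c₀ then β b c₀ else 0) := by
    intro PX PV
    rw [sum_rot]
    rw [Finset.sum_eq_single c₀ (fun c _ hc => by
        refine Finset.sum_eq_zero fun a _ => Finset.sum_eq_zero fun b _ => ?_
        simp [hc])
      (fun hc => absurd (Finset.mem_univ c₀) hc)]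
    rw [Finset.sum_mul_sum]
    refine Finset.sum_congr rfl fun a _ => Finset.sum_congr rfl fun b _ => ?_
    by_cases hg : g b c₀ = g₀
    · by_cases h1 : h a g₀ c₀ = h₀ <;> by_cases h2 : PX a c₀ <;> by_cases h3 : PV b c₀ <;>
        simp [hg, h1, h2, h3]
    · simp [hg]
  -- pr of Z
  have hZ : pr μ Z (c₀, g₀, h₀)
      = (∑ a, if h a g₀ c₀ = h₀ then α a c₀ else 0)
        * (∑ b, if g b c₀ = g₀ then β b c₀ else 0) := by
    rw [pr_comp μ W
      (fun p => (p.2.2, g p.2.1 p.2.2, h p.1 (g p.2.1 p.2.2) p.2.2)) _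
      (fun ω => hZe ω) (c₀, g₀, h₀)]
    rw [Fintype.sum_prod_type]
    simp only [Fintype.sum_prod_type]
    have := main (fun _ _ => True) (fun _ _ => True)
    simp only [and_true] at this
    rw [← this]
    refine Finset.sum_congr rfl fun a _ => Finset.sum_congr rfl fun b _ =>
      Finset.sum_congr rfl fun c _ => ?_
    rw [hfact a b c]
    simp only [Prod.mk.injEq]
  -- pr of (X,Z)
  have hXZ : pr μ (fun ω => (X ω, Z ω)) (x₀, (c₀, g₀, h₀))
      = (∑ a, if h a g₀ c₀ = h₀ ∧ x a c₀ = x₀ then α a c₀ else 0)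
        * (∑ b, if g b c₀ = g₀ then β b c₀ else 0) := by
    rw [pr_comp μ W
      (fun p => (x p.1 p.2.2, (p.2.2, g p.2.1 p.2.2, h p.1 (g p.2.1 p.2.2) p.2.2))) _
      (fun ω => by rw [hXe ω, hZe ω]) (x₀, (c₀, g₀, h₀))]
    rw [Fintype.sum_prod_type]
    simp only [Fintype.sum_prod_type]
    have := main (fun a c => x a c = x₀) (fun _ _ => True)
    simp only [and_true] at this
    rw [← this]
    refine Finset.sum_congr rfl fun a _ => Finset.sum_congr rfl fun b _ =>
      Finset.sum_congr rfl fun c _ => ?_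
    rw [hfact a b c]
    simp only [Prod.mk.injEq]
    by_cases e1 : c = c₀
    · subst e1
      by_cases e2 : x a c = x₀ <;> by_cases e3 : g b c = g₀ <;>
        by_cases e4 : h a (g b c) c = h₀ <;> simp [e2, e3, e4]
    · simp [e1]
  -- pr of (V,Z)
  have hVZ : pr μ (fun ω => (V ω, Z ω)) (v₀, (c₀, g₀, h₀))
      = (∑ a, if h a g₀ c₀ = h₀ then α a c₀ else 0)
        * (∑ b, if g b c₀ = g₀ ∧ v b c₀ = v₀ then β b c₀ else 0) := by
    rw [pr_comp μ W
      (fun p => (v p.2.1 p.2.2, (p.2.2, g p.2.1 p.2.2, h p.1 (g p.2.1 p.2.2) p.2.2))) _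
      (fun ω => by rw [hVe ω, hZe ω]) (v₀, (c₀, g₀, h₀))]
    rw [Fintype.sum_prod_type]
    simp only [Fintype.sum_prod_type]
    have := main (fun _ _ => True) (fun b c => v b c = v₀)
    simp only [true_and, and_true] at this
    rw [← this]
    refine Finset.sum_congr rfl fun a _ => Finset.sum_congr rfl fun b _ =>
      Finset.sum_congr rfl fun c _ => ?_
    rw [hfact a b c]
    simp only [Prod.mk.injEq]
    by_cases e1 : c = c₀
    · subst e1
      by_cases e2 : v b c = v₀ <;> by_cases e3 : g b c = g₀ <;>
        by_cases e4 : h a (g b c) c = h₀ <;> simp [e2, e3, e4]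
    · simp [e1]
  -- pr of (X,V,Z)
  have hXVZ : pr μ (fun ω => (X ω, (V ω, Z ω))) (x₀, (v₀, (c₀, g₀, h₀)))
      = (∑ a, if h a g₀ c₀ = h₀ ∧ x a c₀ = x₀ then α a c₀ else 0)
        * (∑ b, if g b c₀ = g₀ ∧ v b c₀ = v₀ then β b c₀ else 0) := by
    rw [pr_comp μ W
      (fun p => (x p.1 p.2.2, (v p.2.1 p.2.2,
        (p.2.2, g p.2.1 p.2.2, h p.1 (g p.2.1 p.2.2) p.2.2)))) _
      (fun ω => by rw [hXe ω, hVe ω, hZe ω]) (x₀, (v₀, (c₀, g₀, h₀)))]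
    rw [Fintype.sum_prod_type]
    simp only [Fintype.sum_prod_type]
    have := main (fun a c => x a c = x₀) (fun b c => v b c = v₀)
    rw [← this]
    refine Finset.sum_congr rfl fun a _ => Finset.sum_congr rfl fun b _ =>
      Finset.sum_congr rfl fun c _ => ?_
    rw [hfact a b c]
    simp only [Prod.mk.injEq]
    by_cases e1 : c = c₀
    · subst e1
      by_cases e2 : x a c = x₀ <;> by_cases e2' : v b c = v₀ <;> by_cases e3 : g b c = g₀ <;>
        by_cases e4 : h a (g b c) c = h₀ <;> simp [e2, e2', e3, e4]
    · simp [e1]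
  show pr μ _ (x₀, v₀, (c₀, g₀, h₀)) * _ = _
  rw [hXVZ, hZ, hXZ, hVZ]
  ring

/-- conditioning tuple for the chain rule: `(M12, S1^n, S2^{≥k})`. -/
def condZ {n : ℕ} {𝒮₁ 𝒮₂ ℳ₁₂ : Type} (S1 : Fin n → Ω → 𝒮₁) (S2 : Fin n → Ω → 𝒮₂)
    (M12 : Ω → ℳ₁₂) (k : ℕ) : Ω → (ℳ₁₂ × (Fin n → 𝒮₁)) × (Fin n → Option 𝒮₂) :=
  fun ω => ((M12 ω, fun j => S1 j ω), fun j => if k ≤ (j : ℕ) then some (S2 j ω) else none)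

noncomputable def EG {n : ℕ} {𝒮₁ 𝒮₂ ℳ₁₂ : Type} [Fintype 𝒮₁] [Fintype 𝒮₂] [Fintype ℳ₁₂]
    (μ : Ω → ℝ) (S1 : Fin n → Ω → 𝒮₁) (S2 : Fin n → Ω → 𝒮₂) (M12 : Ω → ℳ₁₂) (k : ℕ) : ℝ :=
  ent μ (condZ S1 S2 M12 k)

noncomputable def EGy {n : ℕ} {𝒮₁ 𝒮₂ ℳ₁₂ ℳ₂₁ : Type} [Fintype 𝒮₁] [Fintype 𝒮₂]
    [Fintype ℳ₁₂] [Fintype ℳ₂₁]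
    (μ : Ω → ℝ) (S1 : Fin n → Ω → 𝒮₁) (S2 : Fin n → Ω → 𝒮₂) (M12 : Ω → ℳ₁₂)
    (M21 : Ω → ℳ₂₁) (k : ℕ) : ℝ :=
  ent μ (fun ω => (M21 ω, condZ S1 S2 M12 k ω))

lemma tele_step {n : ℕ} {𝒮₁ 𝒮₂ ℳ₁₂ ℳ₂₁ : Type} [Fintype 𝒮₁] [Fintype 𝒮₂]
    [Fintype ℳ₁₂] [Fintype ℳ₂₁]
    (μ : Ω → ℝ) (S1 : Fin n → Ω → 𝒮₁) (S2 : Fin n → Ω → 𝒮₂) (M12 : Ω → ℳ₁₂)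
    (M21 : Ω → ℳ₂₁) (ω₀ : Ω) (i : Fin n) :
    cmi μ (S2 i) M21 (condZ S1 S2 M12 ((i : ℕ) + 1))
      = EG μ S1 S2 M12 i + EGy μ S1 S2 M12 M21 ((i : ℕ) + 1)
        - EGy μ S1 S2 M12 M21 i - EG μ S1 S2 M12 ((i : ℕ) + 1) := by
  have e1 : ent μ (fun ω => (S2 i ω, condZ S1 S2 M12 ((i : ℕ) + 1) ω))
      = EG μ S1 S2 M12 i := by
    refine ent_congr
      (f := fun p => (p.2.1, fun j : Fin n => if (j : ℕ) = (i : ℕ) then some p.1 else p.2.2 j))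
      (g := fun p => ((p.2 i).getD (S2 i ω₀),
        (p.1, fun j : Fin n => if (i : ℕ) + 1 ≤ (j : ℕ) then p.2 j else none)))
      ?_ ?_
    · intro ω
      simp only [condZ]
      refine Prod.ext rfl ?_
      funext j
      dsimp only
      by_cases hj : (j : ℕ) = (i : ℕ)
      · have hj' : j = i := Fin.ext hj
        subst hj'
        simp
      · rw [if_neg hj]
        by_cases h2 : (i : ℕ) ≤ (j : ℕ)
        · rw [if_pos h2, if_pos (by omega)]
        · rw [if_neg h2, if_neg (by omega)]
    · intro ω
      simp only [condZ]
      refine Prod.ext (by simp) ?_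
      refine Prod.ext rfl ?_
      funext j
      dsimp only
      by_cases h2 : (i : ℕ) + 1 ≤ (j : ℕ)
      · rw [if_pos h2, if_pos h2, if_pos (by omega)]
      · rw [if_neg h2, if_neg h2]
  have e2 : ent μ (fun ω => (S2 i ω, M21 ω, condZ S1 S2 M12 ((i : ℕ) + 1) ω))
      = EGy μ S1 S2 M12 M21 i := by
    refine ent_congr
      (f := fun p => (p.2.1,
        (p.2.2.1, fun j : Fin n => if (j : ℕ) = (i : ℕ) then some p.1 else p.2.2.2 j)))
      (g := fun p => ((p.2.2 i).getD (S2 i ω₀),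
        (p.1, (p.2.1, fun j : Fin n => if (i : ℕ) + 1 ≤ (j : ℕ) then p.2.2 j else none))))
      ?_ ?_
    · intro ω
      simp only [condZ]
      refine Prod.ext rfl ?_
      refine Prod.ext rfl ?_
      funext j
      dsimp only
      by_cases hj : (j : ℕ) = (i : ℕ)
      · have hj' : j = i := Fin.ext hj
        subst hj'
        simp
      · rw [if_neg hj]
        by_cases h2 : (i : ℕ) ≤ (j : ℕ)
        · rw [if_pos h2, if_pos (by omega)]
        · rw [if_neg h2, if_neg (by omega)]
    · intro ω
      simp only [condZ]
      refine Prod.ext (by simp) ?_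
      refine Prod.ext rfl ?_
      refine Prod.ext rfl ?_
      funext j
      dsimp only
      by_cases h2 : (i : ℕ) + 1 ≤ (j : ℕ)
      · rw [if_pos h2, if_pos h2, if_pos (by omega)]
      · rw [if_neg h2, if_neg h2]
  show ent μ _ + ent μ _ - ent μ _ - ent μ _ = _
  rw [e1, e2]
  unfold EG EGy
  ring

lemma boundary {n : ℕ} {𝒮₁ 𝒮₂ ℳ₁₂ ℳ₂₁ : Type} [Fintype 𝒮₁] [Fintype 𝒮₂]
    [Fintype ℳ₁₂] [Fintype ℳ₂₁]
    (μ : Ω → ℝ) (S1 : Fin n → Ω → 𝒮₁) (S2 : Fin n → Ω → 𝒮₂) (M12 : Ω → ℳ₁₂)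
    (M21 : Ω → ℳ₂₁) (ω₀ : Ω) :
    cmi μ M21 (fun ω => fun i => S2 i ω) (fun ω => (M12 ω, fun i => S1 i ω))
      = EG μ S1 S2 M12 0 + EGy μ S1 S2 M12 M21 n
        - EGy μ S1 S2 M12 M21 0 - EG μ S1 S2 M12 n := by
  have t1 : ent μ (fun ω => (M21 ω, (M12 ω, fun i => S1 i ω)))
      = EGy μ S1 S2 M12 M21 n := by
    refine ent_congr
      (f := fun p => (p.1, (p.2, fun _ : Fin n => (none : Option 𝒮₂))))
      (g := fun p => (p.1, p.2.1)) ?_ ?_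
    · intro ω
      simp only [condZ]
      refine Prod.ext rfl ?_
      refine Prod.ext rfl ?_
      funext j
      dsimp only
      rw [if_neg (by omega : ¬ n ≤ (j : ℕ))]
    · intro ω
      rfl
  have t2 : ent μ (fun ω => ((fun i => S2 i ω), (M12 ω, fun i => S1 i ω)))
      = EG μ S1 S2 M12 0 := by
    refine ent_congr
      (f := fun p => (p.2, fun j : Fin n => some (p.1 j)))
      (g := fun p => (fun j : Fin n => (p.2 j).getD (S2 j ω₀), p.1)) ?_ ?_
    · intro ω
      simp only [condZ]
      refine Prod.ext rfl ?_
      funext j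
      dsimp only
      rw [if_pos (Nat.zero_le _)]
    · intro ω
      refine Prod.ext ?_ rfl
      funext j
      simp [condZ, Nat.zero_le]
  have t3 : ent μ (fun ω => (M21 ω, (fun i => S2 i ω), (M12 ω, fun i => S1 i ω)))
      = EGy μ S1 S2 M12 M21 0 := by
    refine ent_congr
      (f := fun p => (p.1, (p.2.2, fun j : Fin n => some (p.2.1 j))))
      (g := fun p => (p.1, (fun j : Fin n => (p.2.2 j).getD (S2 j ω₀), p.2.1))) ?_ ?_
    · intro ω
      simp only [condZ]
      refine Prod.ext rfl ?_
      refine Prod.ext rfl ?_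
      funext j
      dsimp only
      rw [if_pos (Nat.zero_le _)]
    · intro ω
      refine Prod.ext rfl ?_
      refine Prod.ext ?_ rfl
      funext j
      simp [condZ, Nat.zero_le]
  have t4 : ent μ (fun ω => (M12 ω, fun i => S1 i ω)) = EG μ S1 S2 M12 n := by
    refine ent_congr
      (f := fun p => (p, fun _ : Fin n => (none : Option 𝒮₂)))
      (g := fun p => p.1) ?_ ?_
    · intro ω
      simp only [condZ]
      refine Prod.ext rfl ?_
      funext j
      dsimp only
      rw [if_neg (by omega : ¬ n ≤ (j : ℕ))]
    · intro ω
      rfl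
  simp only [cmi]
  rw [t1, t2, t3, t4]
  ring

lemma ci_step {n : ℕ} {𝒮₁ 𝒮₂ ℳ₁ ℳ₂ ℳ₁₂ ℳ₂₁ : Type}
    [Fintype 𝒮₁] [Fintype 𝒮₂] [Fintype ℳ₁] [Fintype ℳ₂] [Fintype ℳ₁₂] [Fintype ℳ₂₁]
    (μ : Ω → ℝ) (hμ0 : ∀ ω, 0 ≤ μ ω)
    (S1 : Fin n → Ω → 𝒮₁) (S2 : Fin n → Ω → 𝒮₂) (M1 : Ω → ℳ₁) (M2 : Ω → ℳ₂)
    (q : 𝒮₁ × 𝒮₂ → ℝ)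
    (hiid : ∀ s : Fin n → 𝒮₁ × 𝒮₂,
      pr μ (fun ω => fun i => (S1 i ω, S2 i ω)) s = ∏ i, q (s i))
    (hindep : ∀ (m1 : ℳ₁) (m2 : ℳ₂) (s : Fin n → 𝒮₁ × 𝒮₂),
      pr μ (fun ω => (M1 ω, M2 ω, fun i => (S1 i ω, S2 i ω))) (m1, m2, s)
        = pr μ M1 m1 * pr μ M2 m2 * pr μ (fun ω => fun i => (S1 i ω, S2 i ω)) s)
    (f12 : ℳ₁ → (Fin n → 𝒮₁) → ℳ₁₂)
    (f21 : ℳ₂ → ℳ₁₂ → (Fin n → 𝒮₂) → ℳ₂₁)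
    (M12 : Ω → ℳ₁₂) (hM12 : ∀ ω, M12 ω = f12 (M1 ω) (fun i => S1 i ω))
    (M21 : Ω → ℳ₂₁) (hM21 : ∀ ω, M21 ω = f21 (M2 ω) (M12 ω) (fun i => S2 i ω))
    (ω₀ : Ω) (i : Fin n) :
    cmi μ (S2 i) M21
        (fun ω => ((M12 ω, (fun j : {j : Fin n // j < i} => S1 j.1 ω),
          (fun j : {j : Fin n // i < j} => S2 j.1 ω)), S1 i ω))
      = cmi μ (S2 i) M21 (condZ S1 S2 M12 ((i : ℕ) + 1)) := by
  -- index helpers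
  have hUle : ∀ j : Fin n, ¬ j ≤ i → (i : ℕ) + 1 ≤ (j : ℕ) := by
    intro j hj
    have := not_le.mp hj
    rw [Fin.lt_def] at this
    omega
  have hLle : ∀ j : Fin n, j ≤ i → ¬ ((i : ℕ) + 1 ≤ (j : ℕ)) := by
    intro j hj
    rw [Fin.le_def] at hj
    omega
  -- canonical variables
  set V : Ω → ({j : Fin n // ¬ j ≤ i} → 𝒮₁) := fun ω => fun j => S1 j.1 ω with hV
  set Z1 : Ω → (({j : Fin n // j ≤ i} → 𝒮₁) × ({j : Fin n // ¬ j ≤ i} → 𝒮₂))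
      × ℳ₁₂ × Unit :=
    fun ω => ((fun j => S1 j.1 ω, fun j => S2 j.1 ω), M12 ω, ()) with hZ1
  set Z2 : Ω → (({j : Fin n // j ≤ i} → 𝒮₁) × ({j : Fin n // ¬ j ≤ i} → 𝒮₂))
      × ℳ₁₂ × ℳ₂₁ :=
    fun ω => ((fun j => S1 j.1 ω, fun j => S2 j.1 ω), M12 ω, M21 ω) with hZ2
  set uu : Ω → ℳ₂ × ({j : Fin n // j ≤ i} → 𝒮₂) :=
    fun ω => (M2 ω, fun j => S2 j.1 ω) with huu
  set tt : Ω → ℳ₁ × ({j : Fin n // ¬ j ≤ i} → 𝒮₁) :=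
    fun ω => (M1 ω, fun j => S1 j.1 ω) with htt
  set rr : Ω → ({j : Fin n // j ≤ i} → 𝒮₁) × ({j : Fin n // ¬ j ≤ i} → 𝒮₂) :=
    fun ω => (fun j => S1 j.1 ω, fun j => S2 j.1 ω) with hrr
  set αα : (ℳ₂ × ({j : Fin n // j ≤ i} → 𝒮₂))
      → (({j : Fin n // j ≤ i} → 𝒮₁) × ({j : Fin n // ¬ j ≤ i} → 𝒮₂)) → ℝ :=
    fun a c => pr μ M2 a.1 * ∏ j : {j : Fin n // j ≤ i}, q (c.1 j, a.2 j) with hαα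
  set ββ : (ℳ₁ × ({j : Fin n // ¬ j ≤ i} → 𝒮₁))
      → (({j : Fin n // j ≤ i} → 𝒮₁) × ({j : Fin n // ¬ j ≤ i} → 𝒮₂)) → ℝ :=
    fun b c => pr μ M1 b.1 * ∏ j : {j : Fin n // ¬ j ≤ i}, q (b.2 j, c.2 j) with hββ
  have hfact : ∀ a b c, pr μ (fun ω => (uu ω, tt ω, rr ω)) (a, b, c) = αα a c * ββ b c := by
    rintro ⟨m2, s2L⟩ ⟨m1, s1U⟩ ⟨s1L, s2U⟩
    have key : pr μ (fun ω => (uu ω, tt ω, rr ω)) ((m2, s2L), (m1, s1U), (s1L, s2U))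
        = pr μ (fun ω => (M1 ω, M2 ω, fun j => (S1 j ω, S2 j ω)))
            (m1, m2, fun j => if hj : j ≤ i then (s1L ⟨j, hj⟩, s2L ⟨j, hj⟩)
              else (s1U ⟨j, hj⟩, s2U ⟨j, hj⟩)) := by
      apply pr_congr
      intro ω
      simp only [huu, htt, hrr, Prod.mk.injEq]
      constructor
      · rintro ⟨⟨h1, h2⟩, ⟨h3, h4⟩, h5, h6⟩
        refine ⟨h3, h1, ?_⟩
        funext j
        by_cases hj : j ≤ i
        · rw [dif_pos hj, ← congrFun h5 ⟨j, hj⟩, ← congrFun h2 ⟨j, hj⟩]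
        · rw [dif_neg hj, ← congrFun h4 ⟨j, hj⟩, ← congrFun h6 ⟨j, hj⟩]
      · rintro ⟨h1, h2, h3⟩
        refine ⟨⟨h2, ?_⟩, ⟨h1, ?_⟩, ?_, ?_⟩
        · funext j
          have hj := congrFun h3 j.1
          rw [dif_pos j.2] at hj
          exact congrArg Prod.snd hj
        · funext j
          have hj := congrFun h3 j.1
          rw [dif_neg j.2] at hj
          exact congrArg Prod.fst hj
        · funext j
          have hj := congrFun h3 j.1
          rw [dif_pos j.2] at hj
          exact congrArg Prod.fst hj
        · funext j
          have hj := congrFun h3 j.1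
          rw [dif_neg j.2] at hj
          exact congrArg Prod.snd hj
    rw [key, hindep, hiid]
    have hsplit : (∏ j : Fin n, q (if hj : j ≤ i then (s1L ⟨j, hj⟩, s2L ⟨j, hj⟩)
          else (s1U ⟨j, hj⟩, s2U ⟨j, hj⟩)))
        = (∏ j : {j : Fin n // j ≤ i}, q (s1L j, s2L j))
          * ∏ j : {j : Fin n // ¬ j ≤ i}, q (s1U j, s2U j) := by
      rw [← Fintype.prod_subtype_mul_prod_subtype (fun j : Fin n => j ≤ i)
        (fun j => q (if hj : j ≤ i then (s1L ⟨j, hj⟩, s2L ⟨j, hj⟩)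
          else (s1U ⟨j, hj⟩, s2U ⟨j, hj⟩)))]
      congr 1
      · refine Finset.prod_congr rfl fun j _ => ?_
        rw [dif_pos j.2]
      · refine Finset.prod_congr rfl fun j _ => ?_
        rw [dif_neg j.2]
    rw [hsplit, hαα, hββ]
    ring
  -- pointwise identification of messages
  have hgM12 : ∀ ω, M12 ω
      = f12 (M1 ω) (fun j : Fin n => if hj : j ≤ i
          then (rr ω).1 ⟨j, hj⟩ else (tt ω).2 ⟨j, hj⟩) := by
    intro ω
    rw [hM12 ω]
    congr 1
    funext j
    by_cases hj : j ≤ i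
    · rw [dif_pos hj, hrr]
    · rw [dif_neg hj, htt]
  have hhM21 : ∀ ω, M21 ω
      = f21 (M2 ω) (M12 ω) (fun j : Fin n => if hj : j ≤ i
          then (uu ω).2 ⟨j, hj⟩ else (rr ω).2 ⟨j, hj⟩) := by
    intro ω
    rw [hM21 ω]
    congr 1
    funext j
    by_cases hj : j ≤ i
    · rw [dif_pos hj, huu]
    · rw [dif_neg hj, hrr]
  have CI1 : CondIndep μ (S2 i) V Z1 := by
    refine condIndep_core μ uu tt rr αα ββ hfact
      (fun a _ => a.2 ⟨i, le_refl i⟩) (fun b _ => b.2)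
      (fun b c => f12 b.1 (fun j : Fin n => if hj : j ≤ i then c.1 ⟨j, hj⟩ else b.2 ⟨j, hj⟩))
      (fun _ _ _ => ())
      (S2 i) ?_ V ?_ Z1 ?_
    · intro ω; rw [huu]
    · intro ω; rw [hV, htt]
    · intro ω
      rw [hZ1]
      refine Prod.ext (by rw [hrr]) (Prod.ext ?_ rfl)
      exact hgM12 ω
  have CI2 : CondIndep μ (S2 i) V Z2 := by
    refine condIndep_core μ uu tt rr αα ββ hfact
      (fun a _ => a.2 ⟨i, le_refl i⟩) (fun b _ => b.2)
      (fun b c => f12 b.1 (fun j : Fin n => if hj : j ≤ i then c.1 ⟨j, hj⟩ else b.2 ⟨j, hj⟩))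
      (fun a m c => f21 a.1 m (fun j : Fin n => if hj : j ≤ i then a.2 ⟨j, hj⟩ else c.2 ⟨j, hj⟩))
      (S2 i) ?_ V ?_ Z2 ?_
    · intro ω; rw [huu]
    · intro ω; rw [hV, htt]
    · intro ω
      rw [hZ2]
      refine Prod.ext (by rw [hrr]) (Prod.ext ?_ ?_)
      · exact hgM12 ω
      · dsimp only
        rw [hhM21 ω, ← hgM12 ω]
  have E1 := condIndep_ent hμ0 CI1
  have E2 := condIndep_ent hμ0 CI2
  set WW : Ω → (ℳ₁₂ × ({j : Fin n // j < i} → 𝒮₁) × ({j : Fin n // i < j} → 𝒮₂)) × 𝒮₁ :=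
    fun ω => ((M12 ω, (fun j : {j : Fin n // j < i} => S1 j.1 ω),
      (fun j : {j : Fin n // i < j} => S2 j.1 ω)), S1 i ω) with hWW
  set DD : Ω → (ℳ₁₂ × (Fin n → 𝒮₁)) × (Fin n → Option 𝒮₂) :=
    condZ S1 S2 M12 ((i : ℕ) + 1) with hDD
  -- recodings, W side
  have B2 : ent μ WW = ent μ Z1 := by
    refine ent_congr
      (f := fun w => ((fun j => if hj : j.1 < i then w.1.2.1 ⟨j.1, hj⟩ else w.2,
        fun j => w.1.2.2 ⟨j.1, not_le.mp j.2⟩), w.1.1, ()))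
      (g := fun z => ((z.2.1, fun j => z.1.1 ⟨j.1, le_of_lt j.2⟩,
        fun j => z.1.2 ⟨j.1, not_le.mpr j.2⟩), z.1.1 ⟨i, le_refl i⟩)) ?_ ?_
    · intro ω
      rw [hZ1, hWW]
      refine Prod.ext (Prod.ext ?_ rfl) rfl
      funext j
      dsimp only
      by_cases hj : j.1 < i
      · rw [dif_pos hj]
      · rw [dif_neg hj, le_antisymm j.2 (not_lt.mp hj)]
    · intro ω
      rw [hZ1, hWW]
  have B1 : ent μ (fun ω => (S2 i ω, WW ω)) = ent μ (fun ω => (S2 i ω, Z1 ω)) := by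
    refine ent_congr
      (f := fun p => (p.1, ((fun j => if hj : j.1 < i then p.2.1.2.1 ⟨j.1, hj⟩ else p.2.2,
        fun j => p.2.1.2.2 ⟨j.1, not_le.mp j.2⟩), p.2.1.1, ())))
      (g := fun p => (p.1, ((p.2.2.1, fun j => p.2.1.1 ⟨j.1, le_of_lt j.2⟩,
        fun j => p.2.1.2 ⟨j.1, not_le.mpr j.2⟩), p.2.1.1 ⟨i, le_refl i⟩))) ?_ ?_
    · intro ω
      rw [hZ1, hWW]
      refine Prod.ext rfl (Prod.ext (Prod.ext ?_ rfl) rfl)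
      funext j
      dsimp only
      by_cases hj : j.1 < i
      · rw [dif_pos hj]
      · rw [dif_neg hj, le_antisymm j.2 (not_lt.mp hj)]
    · intro ω
      rw [hZ1, hWW]
  have B3 : ent μ (fun ω => (M21 ω, WW ω)) = ent μ Z2 := by
    refine ent_congr
      (f := fun p => ((fun j => if hj : j.1 < i then p.2.1.2.1 ⟨j.1, hj⟩ else p.2.2,
        fun j => p.2.1.2.2 ⟨j.1, not_le.mp j.2⟩), p.2.1.1, p.1))
      (g := fun z => (z.2.2, ((z.2.1, fun j => z.1.1 ⟨j.1, le_of_lt j.2⟩,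
        fun j => z.1.2 ⟨j.1, not_le.mpr j.2⟩), z.1.1 ⟨i, le_refl i⟩))) ?_ ?_
    · intro ω
      rw [hZ2, hWW]
      refine Prod.ext (Prod.ext ?_ rfl) rfl
      funext j
      dsimp only
      by_cases hj : j.1 < i
      · rw [dif_pos hj]
      · rw [dif_neg hj, le_antisymm j.2 (not_lt.mp hj)]
    · intro ω
      rw [hZ2, hWW]
  have B4 : ent μ (fun ω => (S2 i ω, M21 ω, WW ω)) = ent μ (fun ω => (S2 i ω, Z2 ω)) := by
    refine ent_congr
      (f := fun p => (p.1, ((fun j => if hj : j.1 < i then p.2.2.1.2.1 ⟨j.1, hj⟩ else p.2.2.2,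
        fun j => p.2.2.1.2.2 ⟨j.1, not_le.mp j.2⟩), p.2.2.1.1, p.2.1)))
      (g := fun p => (p.1, (p.2.2.2, ((p.2.2.1, fun j => p.2.1.1 ⟨j.1, le_of_lt j.2⟩,
        fun j => p.2.1.2 ⟨j.1, not_le.mpr j.2⟩), p.2.1.1 ⟨i, le_refl i⟩)))) ?_ ?_
    · intro ω
      rw [hZ2, hWW]
      refine Prod.ext rfl (Prod.ext (Prod.ext ?_ rfl) rfl)
      funext j
      dsimp only
      by_cases hj : j.1 < i
      · rw [dif_pos hj]
      · rw [dif_neg hj, le_antisymm j.2 (not_lt.mp hj)]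
    · intro ω
      rw [hZ2, hWW]
  -- recodings, D side
  have A2 : ent μ DD = ent μ (fun ω => (V ω, Z1 ω)) := by
    refine ent_congr
      (f := fun d => (fun j => d.1.2 j.1, ((fun j => d.1.2 j.1,
        fun j => (d.2 j.1).getD (S2 j.1 ω₀)), d.1.1, ())))
      (g := fun p => ((p.2.2.1, fun j : Fin n => if hj : j ≤ i then p.2.1.1 ⟨j, hj⟩
          else p.1 ⟨j, hj⟩),
        fun j : Fin n => if hj : j ≤ i then none else some (p.2.1.2 ⟨j, hj⟩))) ?_ ?_
    · intro ω
      rw [hV, hZ1, hDD]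
      simp only [condZ]
      refine Prod.ext rfl (Prod.ext (Prod.ext rfl ?_) rfl)
      funext j
      dsimp only
      rw [if_pos (hUle j.1 j.2)]
      rfl
    · intro ω
      rw [hV, hZ1, hDD]
      simp only [condZ]
      refine Prod.ext (Prod.ext rfl ?_) ?_
      · funext j
        dsimp only
        by_cases hj : j ≤ i
        · rw [dif_pos hj]
        · rw [dif_neg hj]
      · funext j
        dsimp only
        by_cases hj : j ≤ i
        · rw [dif_pos hj, if_neg (hLle j hj)]
        · rw [dif_neg hj, if_pos (hUle j hj)]
  have A1 : ent μ (fun ω => (S2 i ω, DD ω)) = ent μ (fun ω => (S2 i ω, V ω, Z1 ω)) := by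
    refine ent_congr
      (f := fun p => (p.1, (fun j => p.2.1.2 j.1, ((fun j => p.2.1.2 j.1,
        fun j => (p.2.2 j.1).getD (S2 j.1 ω₀)), p.2.1.1, ()))))
      (g := fun p => (p.1, ((p.2.2.2.1, fun j : Fin n => if hj : j ≤ i then p.2.2.1.1 ⟨j, hj⟩
          else p.2.1 ⟨j, hj⟩),
        fun j : Fin n => if hj : j ≤ i then none else some (p.2.2.1.2 ⟨j, hj⟩)))) ?_ ?_
    · intro ω
      rw [hV, hZ1, hDD]
      simp only [condZ]
      refine Prod.ext rfl (Prod.ext rfl (Prod.ext (Prod.ext rfl ?_) rfl))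
      funext j
      dsimp only
      rw [if_pos (hUle j.1 j.2)]
      rfl
    · intro ω
      rw [hV, hZ1, hDD]
      simp only [condZ]
      refine Prod.ext rfl (Prod.ext (Prod.ext rfl ?_) ?_)
      · funext j
        dsimp only
        by_cases hj : j ≤ i
        · rw [dif_pos hj]
        · rw [dif_neg hj]
      · funext j
        dsimp only
        by_cases hj : j ≤ i
        · rw [dif_pos hj, if_neg (hLle j hj)]
        · rw [dif_neg hj, if_pos (hUle j hj)]
  have A3 : ent μ (fun ω => (M21 ω, DD ω)) = ent μ (fun ω => (V ω, Z2 ω)) := by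
    refine ent_congr
      (f := fun p => (fun j => p.2.1.2 j.1, ((fun j => p.2.1.2 j.1,
        fun j => (p.2.2 j.1).getD (S2 j.1 ω₀)), p.2.1.1, p.1)))
      (g := fun p => (p.2.2.2, ((p.2.2.1, fun j : Fin n => if hj : j ≤ i
          then p.2.1.1 ⟨j, hj⟩ else p.1 ⟨j, hj⟩),
        fun j : Fin n => if hj : j ≤ i then none else some (p.2.1.2 ⟨j, hj⟩)))) ?_ ?_
    · intro ω
      rw [hV, hZ2, hDD]
      simp only [condZ]
      refine Prod.ext rfl (Prod.ext (Prod.ext rfl ?_) rfl)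
      funext j
      dsimp only
      rw [if_pos (hUle j.1 j.2)]
      rfl
    · intro ω
      rw [hV, hZ2, hDD]
      simp only [condZ]
      refine Prod.ext rfl (Prod.ext (Prod.ext rfl ?_) ?_)
      · funext j
        dsimp only
        by_cases hj : j ≤ i
        · rw [dif_pos hj]
        · rw [dif_neg hj]
      · funext j
        dsimp only
        by_cases hj : j ≤ i
        · rw [dif_pos hj, if_neg (hLle j hj)]
        · rw [dif_neg hj, if_pos (hUle j hj)]
  have A4 : ent μ (fun ω => (S2 i ω, M21 ω, DD ω))
      = ent μ (fun ω => (S2 i ω, V ω, Z2 ω)) := by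
    refine ent_congr
      (f := fun p => (p.1, (fun j => p.2.2.1.2 j.1, ((fun j => p.2.2.1.2 j.1,
        fun j => (p.2.2.2 j.1).getD (S2 j.1 ω₀)), p.2.2.1.1, p.2.1))))
      (g := fun p => (p.1, (p.2.2.2.2, ((p.2.2.2.1, fun j : Fin n => if hj : j ≤ i
          then p.2.2.1.1 ⟨j, hj⟩ else p.2.1 ⟨j, hj⟩),
        fun j : Fin n => if hj : j ≤ i then none else some (p.2.2.1.2 ⟨j, hj⟩))))) ?_ ?_
    · intro ω
      rw [hV, hZ2, hDD]
      simp only [condZ]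
      refine Prod.ext rfl (Prod.ext rfl (Prod.ext (Prod.ext rfl ?_) rfl))
      funext j
      dsimp only
      rw [if_pos (hUle j.1 j.2)]
      rfl
    · intro ω
      rw [hV, hZ2, hDD]
      simp only [condZ]
      refine Prod.ext rfl (Prod.ext rfl (Prod.ext (Prod.ext rfl ?_) ?_))
      · funext j
        dsimp only
        by_cases hj : j ≤ i
        · rw [dif_pos hj]
        · rw [dif_neg hj]
      · funext j
        dsimp only
        by_cases hj : j ≤ i
        · rw [dif_pos hj, if_neg (hLle j hj)]
        · rw [dif_neg hj, if_pos (hUle j hj)]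
  simp only [cmi]
  rw [B1, B2, B3, B4, A1, A2, A3, A4]
  linarith [E1, E2]

/-- Converse step for Theorem 2, eq. (42): with `(S₁ᵢ,S₂ᵢ)` i.i.d., `M₁,M₂` mutually
independent and independent of the states, `M₁₂ = f₁₂(M₁,S₁ⁿ)` and
`M₂₁ = f₂₁(M₂,M₁₂,S₂ⁿ)`, one has
`I(M₂₁;S₂ⁿ|M₁₂,S₁ⁿ) = Σᵢ I(S₂ᵢ;Vᵢ|Uᵢ,S₁ᵢ)` where `Uᵢ = (M₁₂,S₁ⁱ⁻¹,S₂ᵢ₊₁ⁿ)` and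
`Vᵢ = M₂₁`. -/

theorem cmi_state_decomposition_two_way_back
    {Ω : Type} [Fintype Ω] (μ : Ω → ℝ) (hμ : IsPMF μ)
    {n : ℕ} {𝒮₁ 𝒮₂ ℳ₁ ℳ₂ ℳ₁₂ ℳ₂₁ : Type}
    [Fintype 𝒮₁] [Fintype 𝒮₂] [Fintype ℳ₁] [Fintype ℳ₂] [Fintype ℳ₁₂] [Fintype ℳ₂₁]
    (S1 : Fin n → Ω → 𝒮₁) (S2 : Fin n → Ω → 𝒮₂) (M1 : Ω → ℳ₁) (M2 : Ω → ℳ₂)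
    (q : 𝒮₁ × 𝒮₂ → ℝ) (hq : IsPMF q)
    (hiid : ∀ s : Fin n → 𝒮₁ × 𝒮₂,
      pr μ (fun ω => fun i => (S1 i ω, S2 i ω)) s = ∏ i, q (s i))
    (hindep : ∀ (m1 : ℳ₁) (m2 : ℳ₂) (s : Fin n → 𝒮₁ × 𝒮₂),
      pr μ (fun ω => (M1 ω, M2 ω, fun i => (S1 i ω, S2 i ω))) (m1, m2, s)
        = pr μ M1 m1 * pr μ M2 m2 * pr μ (fun ω => fun i => (S1 i ω, S2 i ω)) s)
    (f12 : ℳ₁ → (Fin n → 𝒮₁) → ℳ₁₂)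
    (f21 : ℳ₂ → ℳ₁₂ → (Fin n → 𝒮₂) → ℳ₂₁)
    (M12 : Ω → ℳ₁₂) (hM12 : ∀ ω, M12 ω = f12 (M1 ω) (fun i => S1 i ω))
    (M21 : Ω → ℳ₂₁) (hM21 : ∀ ω, M21 ω = f21 (M2 ω) (M12 ω) (fun i => S2 i ω)) :
    cmi μ M21 (fun ω => fun i => S2 i ω)
        (fun ω => (M12 ω, fun i => S1 i ω))
      = ∑ i : Fin n, cmi μ (S2 i) M21
          (fun ω => ((M12 ω, (fun j : {j : Fin n // j < i} => S1 j.1 ω),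
            (fun j : {j : Fin n // i < j} => S2 j.1 ω)), S1 i ω)) := by
  obtain ⟨hμ0, hμ1⟩ := hμ
  have hne : Nonempty Ω := by
    by_contra h
    rw [not_nonempty_iff] at h
    haveI := h
    rw [Finset.univ_eq_empty, Finset.sum_empty] at hμ1
    exact one_ne_zero hμ1.symm
  obtain ⟨ω₀⟩ := hne
  have tel : ∑ i : Fin n, (EG μ S1 S2 M12 (i : ℕ) + EGy μ S1 S2 M12 M21 ((i : ℕ) + 1)
        - EGy μ S1 S2 M12 M21 (i : ℕ) - EG μ S1 S2 M12 ((i : ℕ) + 1))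
      = EG μ S1 S2 M12 0 + EGy μ S1 S2 M12 M21 n
        - EGy μ S1 S2 M12 M21 0 - EG μ S1 S2 M12 n := by
    rw [Fin.sum_univ_eq_sum_range (fun k => EG μ S1 S2 M12 k + EGy μ S1 S2 M12 M21 (k + 1)
      - EGy μ S1 S2 M12 M21 k - EG μ S1 S2 M12 (k + 1)) n]
    have h1 : ∑ k ∈ Finset.range n, (EG μ S1 S2 M12 k - EG μ S1 S2 M12 (k + 1))
        = EG μ S1 S2 M12 0 - EG μ S1 S2 M12 n := Finset.sum_range_sub' _ n
    have h2 : ∑ k ∈ Finset.range n, (EGy μ S1 S2 M12 M21 (k + 1) - EGy μ S1 S2 M12 M21 k)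
        = EGy μ S1 S2 M12 M21 n - EGy μ S1 S2 M12 M21 0 := Finset.sum_range_sub _ n
    calc ∑ k ∈ Finset.range n, (EG μ S1 S2 M12 k + EGy μ S1 S2 M12 M21 (k + 1)
          - EGy μ S1 S2 M12 M21 k - EG μ S1 S2 M12 (k + 1))
        = ∑ k ∈ Finset.range n, ((EG μ S1 S2 M12 k - EG μ S1 S2 M12 (k + 1))
            + (EGy μ S1 S2 M12 M21 (k + 1) - EGy μ S1 S2 M12 M21 k)) :=
          Finset.sum_congr rfl fun k _ => by ring
      _ = EG μ S1 S2 M12 0 + EGy μ S1 S2 M12 M21 n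
          - EGy μ S1 S2 M12 M21 0 - EG μ S1 S2 M12 n := by
          rw [Finset.sum_add_distrib, h1, h2]
          ring
  calc cmi μ M21 (fun ω => fun i => S2 i ω) (fun ω => (M12 ω, fun i => S1 i ω))
      = EG μ S1 S2 M12 0 + EGy μ S1 S2 M12 M21 n
        - EGy μ S1 S2 M12 M21 0 - EG μ S1 S2 M12 n := boundary μ S1 S2 M12 M21 ω₀
    _ = ∑ i : Fin n, (EG μ S1 S2 M12 (i : ℕ) + EGy μ S1 S2 M12 M21 ((i : ℕ) + 1)
        - EGy μ S1 S2 M12 M21 (i : ℕ) - EG μ S1 S2 M12 ((i : ℕ) + 1)) := tel.symm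
    _ = ∑ i : Fin n, cmi μ (S2 i) M21 (condZ S1 S2 M12 ((i : ℕ) + 1)) :=
        (Finset.sum_congr rfl fun i _ => tele_step μ S1 S2 M12 M21 ω₀ i).symm
    _ = ∑ i : Fin n, cmi μ (S2 i) M21
          (fun ω => ((M12 ω, (fun j : {j : Fin n // j < i} => S1 j.1 ω),
            (fun j : {j : Fin n // i < j} => S2 j.1 ω)), S1 i ω)) :=
        Finset.sum_congr rfl fun i _ =>
          (ci_step μ hμ0 S1 S2 M1 M2 q hiid hindep f12 f21 M12 hM12 M21 hM21 ω₀ i).symm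

end Paper
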